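/- Let S, Q ⊂ ℝ be finite sets of equal cardinality, let r(S) be half the minimum distance between distinct points of S, and let g : S → Q be a bijection with |p − g(p)| ≤ ε for every p ∈ S, where 0 ≤ ε < r(S). Then g is strictly increasing, and for every p ∈ S and every i with 1 ≤ i ≤ |{q ∈ S : q > p}|, the i-th smallest rightward distance of p in S and the i-th smallest rightward distance of g(p) in Q differ by at most 2ε. -/

import Mathlib

/-- The `i`-th smallest rightward distance of a point `p` of a finite set
`S ⊂ ℝ`: the `i`-th entry of the increasing list of the distances `q − p` over
the points `q ∈ S` with `q > p`. -/
noncomputable def ithRight (S : Finset ℝ) (p : ℝ) (i : ℕ) : ℝ :=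
  (Multiset.sort
    (((S.filter fun q => p < q).val).map fun q => q - p) (· ≤ ·)).getD (i - 1) 0

private lemma sortCoe (l : List ℝ) (h : l.Pairwise (· ≤ ·)) :
    Multiset.sort (l : Multiset ℝ) (· ≤ ·) = l :=
  List.Perm.eq_of_pairwise' (Multiset.pairwise_sort _ _) h
    (Multiset.coe_eq_coe.mp (Multiset.sort_eq _ _))

theorem stmt_13 (ε r : ℝ) (hε : 0 ≤ ε) (S Q : Finset ℝ)
    (hcard : S.card = Q.card) (h2 : 2 ≤ S.card)
    (hr1 : ∀ a ∈ S, ∀ b ∈ S, a ≠ b → 2 * r ≤ |a - b|)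
    (hr2 : ∃ a ∈ S, ∃ b ∈ S, a ≠ b ∧ 2 * r = |a - b|)
    (hεr : ε < r)
    (g : ℝ → ℝ) (hg : Set.BijOn g ↑S ↑Q) (hclose : ∀ p ∈ S, |p - g p| ≤ ε) :
    (∀ p ∈ S, ∀ q ∈ S, p < q → g p < g q) ∧
    (∀ p ∈ S, ∀ i : ℕ, 1 ≤ i → i ≤ (S.filter fun q => p < q).card →
      |ithRight S p i - ithRight Q (g p) i| ≤ 2 * ε) := by
  have hmono : ∀ p ∈ S, ∀ q ∈ S, p < q → g p < g q := by
    intro p hp q hq hpq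
    have h1 := hr1 p hp q hq (ne_of_lt hpq)
    have hab : |p - q| = q - p := by
      rw [abs_sub_comm]; exact abs_of_nonneg (by linarith)
    rw [hab] at h1
    have hp' := abs_le.mp (hclose p hp)
    have hq' := abs_le.mp (hclose q hq)
    linarith [hp'.1, hp'.2, hq'.1, hq'.2]
  refine ⟨hmono, ?_⟩
  intro p hp i hi1 hi2
  set T := S.filter fun q => p < q with hT
  have hTS : ∀ x ∈ T, x ∈ S ∧ p < x := fun x hx => Finset.mem_filter.mp hx
  have hfilQ : Q.filter (fun q => g p < q) = T.image g := by
    ext y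
    simp only [Finset.mem_filter, Finset.mem_image]
    constructor
    · rintro ⟨hyQ, hgy⟩
      obtain ⟨q, hqS, rfl⟩ := hg.surjOn hyQ
      refine ⟨q, Finset.mem_filter.mpr ⟨hqS, ?_⟩, rfl⟩
      by_contra hle
      push_neg at hle
      rcases lt_or_eq_of_le hle with hlt | heq
      · exact absurd (hmono q hqS p hp hlt) (by linarith)
      · exact absurd heq (by intro h; rw [h] at hgy; exact lt_irrefl _ hgy)
    · rintro ⟨q, hqT, rfl⟩
      obtain ⟨hqS, hpq⟩ := hTS q hqT
      exact ⟨hg.mapsTo hqS, hmono p hp q hqS hpq⟩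
  set L := T.sort (· ≤ ·) with hL
  have hLsorted : L.Pairwise (· < ·) := T.sortedLT_sort.pairwise
  have hLT : ∀ x ∈ L, x ∈ T := fun x hx => (Finset.mem_sort _).mp hx
  have hLcoe : (L : Multiset ℝ) = T.val := T.sort_eq _
  have hlen : L.length = T.card := T.length_sort _
  have e1 : Multiset.sort (T.val.map (fun q => q - p)) (· ≤ ·) = L.map (fun q => q - p) := by
    rw [← hLcoe, Multiset.map_coe]
    exact sortCoe _ (List.pairwise_map.mpr (hLsorted.imp fun h => by simp; linarith))
  have hinj : Set.InjOn g ↑T := hg.injOn.mono (by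
    intro x hx; exact (hTS x hx).1)
  have hvalQ : (Q.filter fun q => g p < q).val = T.val.map g := by
    rw [hfilQ]; exact Finset.image_val_of_injOn hinj
  have hpair : L.Pairwise (fun a b => g a - g p ≤ g b - g p) := by
    refine List.pairwise_iff_getElem.mpr ?_
    intro a b ha hb hab
    have h1 := List.pairwise_iff_getElem.mp hLsorted a b ha hb hab
    have ma := (hTS _ (hLT _ (L.getElem_mem ha))).1
    have mb := (hTS _ (hLT _ (L.getElem_mem hb))).1
    have := hmono _ ma _ mb h1
    linarith
  have e2 : Multiset.sort ((Q.filter fun q => g p < q).val.map (fun q => q - g p)) (· ≤ ·)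
      = L.map (fun q => g q - g p) := by
    rw [hvalQ, ← hLcoe]
    have : ((L : Multiset ℝ).map g).map (fun q => q - g p)
        = ((L.map fun q => g q - g p : List ℝ) : Multiset ℝ) := by
      simp [Multiset.map_coe, Function.comp_def]
    rw [this]
    exact sortCoe _ (List.pairwise_map.mpr hpair)
  have hilt : i - 1 < L.length := by rw [hlen]; omega
  have hilt1 : i - 1 < (L.map (fun q => q - p)).length := by simpa using hilt
  have hilt2 : i - 1 < (L.map (fun q => g q - g p)).length := by simpa using hilt
  simp only [ithRight]
  rw [e1, e2, List.getD_eq_getElem _ _ hilt1, List.getD_eq_getElem _ _ hilt2,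
    List.getElem_map, List.getElem_map]
  set x := L[i-1] with hx
  have hxS : x ∈ S := (hTS _ (hLT _ (L.getElem_mem hilt))).1
  have hp' := abs_le.mp (hclose p hp)
  have hx' := abs_le.mp (hclose x hxS)
  rw [abs_sub_le_iff]
  constructor <;> linarith [hp'.1, hp'.2, hx'.1, hx'.2]
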